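/- Let $D_1, D_2, \ldots$ be i.i.d. nonnegative random variables such that $\mathbb{P}(D_i \geq i) \leq \exp(-i/(2\sigma^2))$ for all $i \geq 1$, where $\sigma > 0$. Define $V = \sum_{i=1}^{\infty} \mathbb{I}(D_i \geq i)$. Then for every integer $j \geq 1$, $\mathbb{P}(V \geq j) \leq (2\sigma^2)^j \exp\left(-\frac{j(j-1)}{4\sigma^2}\right)$. -/

import Mathlib

open MeasureTheory ProbabilityTheory
open scoped ENNReal

lemma aux_pi : ∀ (n : ℕ) (h : Fin n → ℕ → ℝ≥0∞),
    ∑' g : Fin n → ℕ, ∏ k, h k (g k) = ∏ k, ∑' i, h k i := by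
  intro n
  induction n with
  | zero =>
    intro h
    simp only [Finset.univ_eq_empty, Finset.prod_empty]
    exact tsum_eq_single (fun _ => 0) (fun g hg => (hg (funext fun k => k.elim0)).elim)
  | succ n ih =>
    intro h
    rw [← (Fin.consEquiv (fun _ : Fin (n+1) => ℕ)).tsum_eq (fun g => ∏ k, h k (g k))]
    have h1 : ∀ p : ℕ × (Fin n → ℕ), (∏ k, h k ((Fin.consEquiv (fun _ => ℕ)) p k))
        = h 0 p.1 * ∏ k : Fin n, h k.succ (p.2 k) := by
      intro p
      rw [Fin.prod_univ_succ]
      simp [Fin.consEquiv]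
    rw [tsum_congr h1]
    have h2 : ∑' (b : ℕ × (Fin n → ℕ)), h 0 b.1 * ∏ k : Fin n, h k.succ (b.2 k)
        = ∑' (a : ℕ) (b : Fin n → ℕ), h 0 a * ∏ k : Fin n, h k.succ (b k) :=
      ENNReal.tsum_prod (f := fun (a : ℕ) (b : Fin n → ℕ) => h 0 a * ∏ k : Fin n, h k.succ (b k))
    rw [h2]
    simp_rw [ENNReal.tsum_mul_left]
    rw [ENNReal.tsum_mul_right, Fin.prod_univ_succ, ih (fun k i => h k.succ i)]

lemma aux_sm {j : ℕ} {g : Fin j → ℕ} (hg : StrictMono g) (k : Fin j) : (k : ℕ) ≤ g k := by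
  have H : ∀ m (hm : m < j), m ≤ g ⟨m, hm⟩ := by
    intro m
    induction m with
    | zero => intro hm; exact Nat.zero_le _
    | succ n ihn =>
      intro hm
      have h1 : n < j := Nat.lt_of_succ_lt hm
      have h2 : g ⟨n, h1⟩ < g ⟨n+1, hm⟩ := hg (by simp [Fin.lt_def])
      have := ihn h1
      omega
  simpa using H k.1 k.2

theorem stmt_0 {Ω : Type*} [MeasurableSpace Ω] (μ : Measure Ω) [IsProbabilityMeasure μ]
    (σ : ℝ) (hσ : 0 < σ) (D : ℕ → Ω → ℝ)
    (hmeas : ∀ i, Measurable (D i))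
    (hnn : ∀ i ω, 0 ≤ D i ω)
    (hindep : iIndepFun D μ)
    (hident : ∀ i j, IdentDistrib (D i) (D j) μ μ)
    (htail : ∀ i : ℕ, 1 ≤ i →
      μ {ω | (i : ℝ) ≤ D i ω} ≤ ENNReal.ofReal (Real.exp (-(i : ℝ) / (2 * σ ^ 2))))
    (j : ℕ) (hj : 1 ≤ j) :
    μ {ω | (j : ℝ≥0∞) ≤ ∑' i : ℕ,
        Set.indicator {ω' | ((i : ℝ) + 1) ≤ D (i + 1) ω'} (fun _ => (1 : ℝ≥0∞)) ω}
      ≤ ENNReal.ofReal ((2 * σ ^ 2) ^ j *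
          Real.exp (-((j : ℝ) * ((j : ℝ) - 1)) / (4 * σ ^ 2))) := by
  classical
  have hσ2 : (0:ℝ) < 2 * σ ^ 2 := by positivity
  set c : ℝ := 1 / (2 * σ ^ 2) with hc
  have hc0 : 0 < c := by positivity
  set q : ℝ := Real.exp (-c) with hqdef
  have hq0 : 0 < q := Real.exp_pos _
  have hq1 : q < 1 := by
    rw [hqdef]
    have := Real.exp_lt_exp.mpr (neg_lt_zero.mpr hc0)
    simpa using this
  have hqpow : ∀ n : ℕ, q ^ n = Real.exp (-(n:ℝ) / (2 * σ ^ 2)) := by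
    intro n
    rw [hqdef, ← Real.exp_nat_mul]
    congr 1
    field_simp [hc]
    have h5 : (2 * σ ^ 2) * c = 1 := by rw [hc]; field_simp
    linear_combination (-(n:ℝ)) * h5
  -- key inequality q/(1-q) ≤ 2σ²
  have h1q : 0 < 1 - q := by linarith
  have hkey : q * (1 - q)⁻¹ ≤ 2 * σ ^ 2 := by
    rw [← div_eq_mul_inv, div_le_iff₀ h1q]
    have h2 : c + 1 ≤ Real.exp c := Real.add_one_le_exp c
    have h3 : c * q ≤ 1 - q := by
      have he : Real.exp c * q = 1 := by rw [hqdef, ← Real.exp_add]; simp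
      nlinarith
    have h5 : (2 * σ ^ 2) * c = 1 := by rw [hc]; field_simp
    nlinarith
  -- events
  set A : ℕ → Set Ω := fun k => {ω' | ((k : ℝ) + 1) ≤ D (k + 1) ω'} with hA
  set B : ℕ → Set Ω := fun i => {ω | (i : ℝ) ≤ D i ω} with hB
  have hAB : ∀ k, A k = B (k + 1) := by
    intro k
    rw [hA, hB]
    ext ω
    simp only [Set.mem_setOf_eq]
    push_cast
    ring_nf
  have hp : ∀ k : ℕ, μ (A k) ≤ ENNReal.ofReal (q ^ (k + 1)) := by
    intro k
    rw [hAB, hqpow]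
    exact_mod_cast htail (k + 1) (Nat.le_add_left 1 k)
  -- bounding family
  set h' : Fin j → ℕ → ℝ≥0∞ :=
    fun k i => if (k : ℕ) ≤ i then ENNReal.ofReal (q ^ (i + 1)) else 0 with hh'
  -- Step 1: inclusion into union over strictly monotone tuples
  set S : Set (Fin j → ℕ) := {g | StrictMono g} with hS
  have hincl : {ω | (j : ℝ≥0∞) ≤ ∑' i : ℕ,
      Set.indicator {ω' | ((i : ℝ) + 1) ≤ D (i + 1) ω'} (fun _ => (1 : ℝ≥0∞)) ω}
      ⊆ ⋃ g : S, ⋂ k, A (g.1 k) := by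
    intro ω hω
    simp only [Set.mem_setOf_eq] at hω
    set T : Set ℕ := {i | ω ∈ A i} with hT
    have hind : ∀ i : ℕ, Set.indicator {ω' | ((i : ℝ) + 1) ≤ D (i + 1) ω'}
        (fun _ => (1 : ℝ≥0∞)) ω = Set.indicator T (fun _ => 1) i := by
      intro i
      by_cases h : ω ∈ A i
      · rw [Set.indicator_of_mem (by exact h) _, Set.indicator_of_mem (by exact h) _]
      · rw [Set.indicator_of_notMem (by exact h) _, Set.indicator_of_notMem (by exact h) _]
    rw [tsum_congr hind] at hω
    have hex : ∃ t : Finset ℕ, ↑t ⊆ T ∧ t.card = j := by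
      by_cases hfin : T.Finite
      · have heq : ∑' i, Set.indicator T (fun _ => (1:ℝ≥0∞)) i
            = ∑ i ∈ hfin.toFinset, Set.indicator T (fun _ => (1:ℝ≥0∞)) i := by
          refine tsum_eq_sum ?_
          intro i hi
          exact Set.indicator_of_notMem (by simpa using hi) _
        rw [heq] at hω
        have hcard : ∑ i ∈ hfin.toFinset, Set.indicator T (fun _ => (1:ℝ≥0∞)) i
            = (hfin.toFinset.card : ℝ≥0∞) := by
          rw [Finset.sum_congr rfl (fun i hi => Set.indicator_of_mem (by simpa using hi) _)]
          simp
        rw [hcard] at hω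
        have hjc : j ≤ hfin.toFinset.card := by exact_mod_cast hω
        obtain ⟨t, hts, htc⟩ := Finset.exists_subset_card_eq hjc
        exact ⟨t, by intro x hx; simpa using hts hx, htc⟩
      · exact Set.Infinite.exists_subset_card_eq hfin j
    obtain ⟨t, hts, htc⟩ := hex
    refine Set.mem_iUnion.mpr ⟨⟨fun k => t.orderEmbOfFin htc k, (t.orderEmbOfFin htc).strictMono⟩, ?_⟩
    refine Set.mem_iInter.mpr fun k => ?_
    exact hts (t.orderEmbOfFin_mem htc k)
  -- Step 2: independence
  have hindc : ∀ g : Fin j → ℕ, StrictMono g →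
      μ (⋂ k, A (g k)) = ∏ k, μ (A (g k)) := by
    intro g hg
    have hinj : Function.Injective (fun k : Fin j => g k + 1) := by
      intro a b hab
      have h6 : g a = g b := by simpa using hab
      exact hg.injective h6
    have hmb : ∀ i ∈ Finset.univ.image (fun k : Fin j => g k + 1),
        MeasurableSet[(inferInstance : MeasurableSpace ℝ).comap (D i)] (B i) :=
      fun i _ => ⟨Set.Ici (i : ℝ), measurableSet_Ici, rfl⟩
    have hmain := hindep.meas_biInter (S := Finset.univ.image (fun k : Fin j => g k + 1))
      (s := B) hmb
    have e1 : (⋂ i ∈ Finset.univ.image (fun k : Fin j => g k + 1), B i)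
        = ⋂ k, B (g k + 1) := by
      ext ω
      simp only [Set.mem_iInter, Finset.mem_image, Finset.mem_univ, true_and]
      constructor
      · intro h k; exact h _ ⟨k, rfl⟩
      · rintro h i ⟨k, rfl⟩; exact h k
    have e2 : ∏ i ∈ Finset.univ.image (fun k : Fin j => g k + 1), μ (B i)
        = ∏ k, μ (B (g k + 1)) :=
      Finset.prod_image (fun a _ b _ hab => hinj hab)
    simp_rw [hAB]
    rw [← e1, hmain, e2]
  -- Step 3: union bound + tsum bounds
  calc μ {ω | (j : ℝ≥0∞) ≤ ∑' i : ℕ,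
        Set.indicator {ω' | ((i : ℝ) + 1) ≤ D (i + 1) ω'} (fun _ => (1 : ℝ≥0∞)) ω}
      ≤ μ (⋃ g : S, ⋂ k, A (g.1 k)) := measure_mono hincl
    _ ≤ ∑' g : S, μ (⋂ k, A (g.1 k)) := measure_iUnion_le _
    _ ≤ ∑' g : S, ∏ k, h' k (g.1 k) := by
        refine ENNReal.tsum_le_tsum fun g => ?_
        rw [hindc g.1 g.2]
        refine Finset.prod_le_prod' fun k _ => ?_
        have hk : (k : ℕ) ≤ g.1 k := aux_sm g.2 k
        rw [hh']
        simp only [hk, if_pos]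
        exact hp (g.1 k)
    _ ≤ ∑' g : Fin j → ℕ, ∏ k, h' k (g k) := by
        rw [tsum_subtype S (fun g => ∏ k, h' k (g k))]
        exact ENNReal.tsum_le_tsum fun g => Set.indicator_le_self _ _ g
    _ = ∏ k, ∑' i, h' k i := aux_pi j h'
    _ ≤ ∏ k : Fin j, ENNReal.ofReal ((2 * σ ^ 2) * q ^ (k : ℕ)) := by
        refine Finset.prod_le_prod' fun k _ => ?_
        -- compute the geometric sum
        set m := (k : ℕ) with hm
        have hsum : ∑' i, h' k i = ENNReal.ofReal (q ^ (m + 1) * (1 - q)⁻¹) := by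
          set u : ℕ → ℝ := fun i => if m ≤ i then q ^ (i + 1) else 0 with hu
          have hnn' : ∀ i, 0 ≤ u i := by
            intro i; rw [hu]; dsimp; split <;> positivity
          have hsq : Summable (fun i : ℕ => q ^ (i + 1)) := by
            simpa [pow_succ, mul_comm] using
              (summable_geometric_of_lt_one hq0.le hq1).mul_left q
          have hsu : Summable u := by
            refine Summable.of_nonneg_of_le hnn' (fun i => ?_) hsq
            rw [hu]; dsimp; split
            · exact le_refl _
            · positivity
          have h'u : ∀ i, h' k i = ENNReal.ofReal (u i) := by
            intro i; rw [hh', hu]; dsimp; split <;> simp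
          rw [tsum_congr h'u, ← ENNReal.ofReal_tsum_of_nonneg hnn' hsu]
          congr 1
          have := Summable.sum_add_tsum_nat_add (f := u) m hsu
          have hz : ∑ i ∈ Finset.range m, u i = 0 := by
            refine Finset.sum_eq_zero fun i hi => ?_
            rw [hu]; dsimp
            rw [if_neg (by simpa using Finset.mem_range.mp hi)]
          rw [hz, zero_add] at this
          rw [← this]
          have hu2 : ∀ i : ℕ, u (i + m) = q ^ (m + 1) * q ^ i := by
            intro i
            rw [hu]; dsimp
            rw [if_pos (Nat.le_add_left m i)]
            ring
          rw [tsum_congr hu2, tsum_mul_left, tsum_geometric_of_lt_one hq0.le hq1]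
        rw [hsum]
        refine ENNReal.ofReal_le_ofReal ?_
        have : q ^ (m + 1) * (1 - q)⁻¹ = q ^ m * (q * (1 - q)⁻¹) := by ring
        rw [this]
        calc q ^ m * (q * (1 - q)⁻¹) ≤ q ^ m * (2 * σ ^ 2) := by
              exact mul_le_mul_of_nonneg_left hkey (by positivity)
          _ = 2 * σ ^ 2 * q ^ m := by ring
    _ ≤ ENNReal.ofReal ((2 * σ ^ 2) ^ j *
          Real.exp (-((j : ℝ) * ((j : ℝ) - 1)) / (4 * σ ^ 2))) := by
        rw [← ENNReal.ofReal_prod_of_nonneg (fun k _ => by positivity)]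
        refine ENNReal.ofReal_le_ofReal (le_of_eq ?_)
        rw [Finset.prod_mul_distrib, Finset.prod_const]
        have hcard : (Finset.univ : Finset (Fin j)).card = j := by simp
        rw [hcard]
        congr 1
        rw [Fin.prod_univ_eq_prod_range (fun i => q ^ i), Finset.prod_pow_eq_pow_sum]
        rw [hqpow]
        congr 1
        have hsum2 : ((∑ i ∈ Finset.range j, i : ℕ) : ℝ) * 2 = (j : ℝ) * ((j : ℝ) - 1) := by
          have := Finset.sum_range_id_mul_two j
          have hcast : ((∑ i ∈ Finset.range j, i : ℕ) : ℝ) * 2 = ((j * (j - 1) : ℕ) : ℝ) := by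
            exact_mod_cast congrArg (Nat.cast : ℕ → ℝ) this
          rw [hcast]
          push_cast [Nat.cast_sub hj]
          ring
        have hσ' : σ ≠ 0 := ne_of_gt hσ
        push_cast at hsum2
        field_simp
        push_cast
        linear_combination (-2) * hsum2
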